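/- (Mixing-time estimate from the spectral gap.) Let (E, ℰ, μ, (κ_t)) be as in the framework with spectral gap λ > 0. Let ν₀ be a probability measure on E with density f₀ with respect to μ and finite entropy Ent(ν₀) := ∫ f₀ log f₀ dμ, and let ν_t(A) := ∫ κ_t(x, A) ν₀(dx) be the law of the process at time t started from ν₀. Then for every ε ∈ (0,1) and every t ≥ (1 + Ent(ν₀)) / (λ ε), we have sup_{A∈ℰ} |ν_t(A) − μ(A)| ≤ ε; in particular t_mix(ε) ≤ (1 + Ent(ν₀)) / (λ ε). -/

import Mathlib

open MeasureTheory ProbabilityTheory Filter Topology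
open scoped ENNReal

noncomputable section

variable {E : Type*} [MeasurableSpace E]

/-- Total variation distance between two measures: `sup_{A ∈ ℰ} |ν(A) − μ(A)|`. -/
def tvDist (ν μ : Measure E) : ℝ :=
  ⨆ A : {A : Set E // MeasurableSet A}, |(ν A.1).toReal - (μ A.1).toReal|

/-- The Markov operator `P_t f := ∫ f(y) κ_t(·, dy)`. -/
def Pop (κ : ℝ → Kernel E E) (t : ℝ) (f : E → ℝ) : E → ℝ :=
  fun x => ∫ y, f y ∂(κ t x)

/-- The framework: a measurable semigroup `(κ_t)_{t ≥ 0}` of Markov kernels on `E`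
(`κ_0(x, ·) = δ_x` and `κ_{s+t}(x, A) = ∫ κ_t(y, A) κ_s(x, dy)`), reversible with
respect to the probability measure `μ`. -/
structure Framework (E : Type*) [MeasurableSpace E] where
  μ : Measure E
  isProb : IsProbabilityMeasure μ
  κ : ℝ → Kernel E E
  isMarkov : ∀ t : ℝ, IsMarkovKernel (κ t)
  κ_zero : ∀ x : E, (κ 0) x = Measure.dirac x
  semigroup : ∀ s t : ℝ, 0 ≤ s → 0 ≤ t → κ (s + t) = (κ t).comp (κ s)
  reversible : ∀ t : ℝ, 0 ≤ t → ∀ A B : Set E, MeasurableSet A → MeasurableSet B →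
    ∫ x in A, ((κ t) x B).toReal ∂μ = ∫ x in B, ((κ t) x A).toReal ∂μ

/-- The semigroup has spectral gap `lam`: for every `f ∈ L²(μ)` with `∫ f dμ = 0` and
every `t ≥ 0`, `‖P_t f‖₂ ≤ e^{-lam t} ‖f‖₂`. -/
def HasSpectralGap (F : Framework E) (lam : ℝ) : Prop :=
  ∀ f : E → ℝ, MemLp f 2 F.μ → ∫ x, f x ∂F.μ = 0 → ∀ t : ℝ, 0 ≤ t →
    eLpNorm (Pop F.κ t f) 2 F.μ ≤ ENNReal.ofReal (Real.exp (-lam * t)) * eLpNorm f 2 F.μ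

/-- Mixing time of the process started at `x`: `inf {t > 0 : TV(X_t) ≤ ε}` (`∞` if the
set is empty). -/
def tmix (F : Framework E) (x : E) (ε : ℝ) : ℝ≥0∞ :=
  ⨅ (t : ℝ) (_ : 0 < t ∧ tvDist ((F.κ t) x) F.μ ≤ ε), ENNReal.ofReal t

lemma aux_sub_one_le_mul_log {x : ℝ} (hx : 0 ≤ x) : x - 1 ≤ x * Real.log x := by
  rcases eq_or_lt_of_le hx with h | h
  · simp [← h]
  · have h1 := Real.log_le_sub_one_of_pos (show (0:ℝ) < x⁻¹ by positivity)
    rw [Real.log_inv] at h1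
    have h2 : x * x⁻¹ = 1 := mul_inv_cancel₀ h.ne'
    nlinarith [mul_le_mul_of_nonneg_left h1 h.le]

lemma aux_log_le {x : ℝ} (hx : 0 < x) : Real.log x ≤ x * Real.exp (-1) := by
  have h1 := Real.log_le_sub_one_of_pos (show (0:ℝ) < x * Real.exp (-1) by positivity)
  rw [Real.log_mul hx.ne' (Real.exp_ne_zero _), Real.log_exp] at h1
  linarith

lemma aux_neg_exp_le_mul_log {x : ℝ} (hx : 0 ≤ x) : -Real.exp (-1) ≤ x * Real.log x := by
  rcases eq_or_lt_of_le hx with h | h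
  · simp [← h]; positivity
  · have h1 := aux_log_le (show (0:ℝ) < x⁻¹ by positivity)
    rw [Real.log_inv] at h1
    have h2 : x * x⁻¹ = 1 := mul_inv_cancel₀ h.ne'
    nlinarith [mul_le_mul_of_nonneg_left h1 h.le, Real.exp_pos (-1:ℝ)]

lemma aux_eps {ε : ℝ} (h0 : 0 < ε) (h1 : ε ≤ 1) :
    Real.exp ((Real.exp (-1) - 1) / ε) ≤ ε := by
  have hc : Real.exp (-1) ≤ 1/2 := by
    rw [Real.exp_neg, div_eq_mul_inv, one_mul]
    exact inv_anti₀ (by norm_num) (by nlinarith [Real.add_one_le_exp (1:ℝ)])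
  have h2 : -Real.log ε ≤ ε⁻¹ * Real.exp (-1) := by
    have := aux_log_le (show (0:ℝ) < ε⁻¹ by positivity)
    rwa [Real.log_inv] at this
  have h3 : (Real.exp (-1) - 1) / ε ≤ Real.log ε := by
    rw [div_le_iff₀ h0]
    have h4 : ε * ε⁻¹ = 1 := mul_inv_cancel₀ h0.ne'
    nlinarith [mul_le_mul_of_nonneg_left h2 h0.le, Real.exp_pos (-1:ℝ)]
  calc Real.exp ((Real.exp (-1) - 1) / ε) ≤ Real.exp (Real.log ε) := Real.exp_le_exp.2 h3
  _ = ε := Real.exp_log h0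

lemma aux_enorm_sq (y : ℝ) : (‖y‖₊ : ℝ≥0∞) ^ (2:ℝ) = ENNReal.ofReal (y^2) := by
  rw [← enorm_eq_nnnorm, Real.enorm_eq_ofReal_abs, ENNReal.ofReal_rpow_of_nonneg (abs_nonneg _) (by norm_num)]
  congr 1
  rw [show ((2:ℝ)) = ((2:ℕ):ℝ) by norm_num, Real.rpow_natCast, sq_abs]

lemma tvDist_le_of {ν μ : Measure E} {ε : ℝ}
    (h : ∀ A : Set E, MeasurableSet A → |(ν A).toReal - (μ A).toReal| ≤ ε) :
    tvDist ν μ ≤ ε := by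
  have : Nonempty {A : Set E // MeasurableSet A} := ⟨⟨∅, MeasurableSet.empty⟩⟩
  exact ciSup_le fun A => h A.1 A.2


set_option maxHeartbeats 2000000 in
/-- **Mixing-time estimate from the spectral gap.** If the process starts from an
initial distribution `ν₀` with density `f₀` w.r.t. `μ` and finite entropy
`Ent(ν₀) = ∫ f₀ log f₀ dμ`, then for every `ε ∈ (0,1)` and every
`t ≥ (1 + Ent(ν₀))/(λε)`, the law `ν_t = ν₀ κ_t` satisfies `TV(ν_t, μ) ≤ ε`;
in particular `t_mix(ε) ≤ (1 + Ent(ν₀))/(λε)`. -/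
theorem mixing_time_estimate
    (F : Framework E) (lam : ℝ) (hlam : 0 < lam) (hgap : HasSpectralGap F lam)
    (ν₀ : Measure E) (hν₀ : IsProbabilityMeasure ν₀)
    (f₀ : E → ℝ) (hf₀ : ∀ a, 0 ≤ f₀ a)
    (hdens : ν₀ = F.μ.withDensity fun a => ENNReal.ofReal (f₀ a))
    (hint : Integrable (fun a => f₀ a * Real.log (f₀ a)) F.μ)
    (ε : ℝ) (hε : ε ∈ Set.Ioo (0 : ℝ) 1) :
    (∀ t : ℝ, (1 + ∫ a, f₀ a * Real.log (f₀ a) ∂F.μ) / (lam * ε) ≤ t →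
      tvDist (ν₀.bind fun y => (F.κ t) y) F.μ ≤ ε) ∧
    (⨅ (t : ℝ) (_ : 0 < t ∧ tvDist (ν₀.bind fun y => (F.κ t) y) F.μ ≤ ε),
        ENNReal.ofReal t)
      ≤ ENNReal.ofReal ((1 + ∫ a, f₀ a * Real.log (f₀ a) ∂F.μ) / (lam * ε)) := by
  obtain ⟨hε0, hε1⟩ := hε
  haveI := F.isProb
  set w : E → ℝ := fun a => f₀ a * Real.log (f₀ a) with hwdef
  have hwa : ∀ a, w a = f₀ a * Real.log (f₀ a) := fun _ => rfl
  set Ent : ℝ := ∫ a, w a ∂F.μ with hEntdef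
  have hν₀A : ∀ {A : Set E}, MeasurableSet A →
      ν₀ A = ∫⁻ a in A, ENNReal.ofReal (f₀ a) ∂F.μ := by
    intro A hA; rw [hdens, withDensity_apply _ hA]
  have hν₀μ : ν₀ ≪ F.μ := by rw [hdens]; exact withDensity_absolutelyContinuous _ _
  have htotal : ∫⁻ a, ENNReal.ofReal (f₀ a) ∂F.μ = 1 := by
    rw [← setLIntegral_univ, ← hν₀A MeasurableSet.univ]; exact measure_univ
  -- entropy is nonnegative
  have hEnt0 : 0 ≤ Ent := by
    have hup : (1:ℝ≥0∞) ≤ ∫⁻ a, ENNReal.ofReal (w a + 1) ∂F.μ := by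
      rw [← htotal]
      exact lintegral_mono fun a => ENNReal.ofReal_le_ofReal
        (by simp only [hwdef, Pi.zero_apply]; nlinarith [aux_sub_one_le_mul_log (hf₀ a)])
    have hi : Integrable (fun a => w a + 1) F.μ := hint.add (integrable_const 1)
    have heq : ENNReal.ofReal (∫ a, (w a + 1) ∂F.μ) = ∫⁻ a, ENNReal.ofReal (w a + 1) ∂F.μ :=
      ofReal_integral_eq_lintegral_ofReal hi
        (ae_of_all _ fun a => by simp only [hwdef, Pi.zero_apply]; nlinarith [aux_sub_one_le_mul_log (hf₀ a), hf₀ a])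
    have h1 : (1:ℝ) ≤ ∫ a, (w a + 1) ∂F.μ := by
      have := hup.trans_eq heq.symm
      rwa [ENNReal.one_le_ofReal] at this
    have h2 : ∫ a, (w a + 1) ∂F.μ = Ent + 1 := by
      rw [integral_add hint (integrable_const 1), integral_const]; simp [hEntdef]
    linarith [h2 ▸ h1]
  -- numeric setup
  set c : ℝ := Real.exp (-1) with hcdef
  have hc0 : 0 < c := Real.exp_pos _
  set L : ℝ := 2 * (Ent + c) / ε with hLdef
  have hL0 : 0 < L := by positivity
  set M : ℝ := Real.exp L with hMdef
  have hM0 : 0 < M := Real.exp_pos _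
  have hM1 : 1 < M := by
    rw [hMdef, show (1:ℝ) = Real.exp 0 by simp]
    exact Real.exp_lt_exp.2 hL0
  have hlogM : Real.log M = L := Real.log_exp L
  -- measurable version of w
  obtain ⟨w', hw'meas, hww'⟩ : ∃ w', StronglyMeasurable w' ∧ w =ᵐ[F.μ] w' :=
    ⟨hint.1.mk _, hint.1.stronglyMeasurable_mk, hint.1.ae_eq_mk⟩
  obtain ⟨N, hNsub, hNmeas, hNnull⟩ :=
    exists_measurable_superset_of_null (ae_iff.mp hww')
  set T : Set E := {a | M * L < w' a} ∪ N with hTdef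
  have hT : MeasurableSet T :=
    (measurableSet_lt measurable_const hw'meas.measurable).union hNmeas
  have hrestrT : F.μ.restrict T = F.μ.restrict (T \ N) := by
    refine Measure.restrict_congr_set (MeasureTheory.ae_eq_set.2 ⟨?_, ?_⟩)
    · exact measure_mono_null (fun a ha => by
        simp only [Set.mem_diff, Set.mem_diff, not_and, not_not] at ha ⊢
        exact ha.2 ha.1) hNnull
    · simp [Set.diff_subset]
  -- pointwise facts
  have hww'of : ∀ a, a ∉ N → w a = w' a := by
    intro a ha
    by_contra hne
    exact ha (hNsub hne)
  have hfM_onTc : ∀ a ∉ T, f₀ a ≤ M := by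
    intro a ha
    simp only [hTdef, Set.mem_union, Set.mem_setOf_eq, not_or, not_lt] at ha
    obtain ⟨hle, hN⟩ := ha
    by_contra hMf
    push_neg at hMf
    have hlog : L < Real.log (f₀ a) := by
      rw [← hlogM]; exact Real.log_lt_log hM0 hMf
    have : M * L < w a := by
      rw [hwa]
      nlinarith [hL0, hM0]
    rw [hww'of a hN] at this
    linarith
  have hfL_onT : ∀ a ∈ T \ N, L * f₀ a ≤ w a ∧ 0 ≤ w a := by
    intro a ha
    obtain ⟨haT, haN⟩ := ha
    have hgt : M * L < w a := by
      rw [hww'of a haN]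
      rcases haT with h | h
      · exact h
      · exact absurd h haN
    have hw0 : 0 < w a := lt_trans (by positivity) hgt
    have hf1 : 1 < f₀ a := by
      by_contra hle
      push_neg at hle
      have : w a ≤ 0 := by
        rw [hwa]
        rcases eq_or_lt_of_le (hf₀ a) with h0 | h0
        · simp [← h0]
        · have := Real.log_nonpos (hf₀ a) hle
          nlinarith
      linarith
    have hfM : M < f₀ a := by
      by_contra hle
      push_neg at hle
      have hlogle : Real.log (f₀ a) ≤ L := by
        rw [← hlogM]; exact Real.log_le_log (by linarith) hle
      have hlognn : 0 ≤ Real.log (f₀ a) := Real.log_nonneg hf1.le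
      have : w a ≤ M * L := by
        rw [hwa]
        nlinarith
      linarith
    constructor
    · rw [hwa]
      have : L ≤ Real.log (f₀ a) := by
        rw [← hlogM]; exact (Real.log_le_log hM0 hfM.le)
      nlinarith
    · exact hw0.le
  -- the tail set and its mass
  set pE : ℝ≥0∞ := ν₀ T with hpEdef
  have hpE1 : pE ≤ 1 := prob_le_one
  have hpEtop : pE ≠ ∞ := (lt_of_le_of_lt hpE1 ENNReal.one_lt_top).ne
  set p : ℝ := pE.toReal with hpdef
  have hp0 : 0 ≤ p := ENNReal.toReal_nonneg
  -- tail bound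
  have hwT0 : ∀ᵐ a ∂F.μ, a ∈ T → 0 ≤ w a := by
    filter_upwards [measure_eq_zero_iff_ae_notMem.mp hNnull] with a haN haT
    exact (hfL_onT a ⟨haT, haN⟩).2
  have htail : L * p ≤ Ent + c := by
    have e2 : ENNReal.ofReal L * pE ≤ ∫⁻ a in T, ENNReal.ofReal (w a) ∂F.μ := by
      rw [hpEdef, hν₀A hT, ← lintegral_const_mul' _ _ ENNReal.ofReal_ne_top, hrestrT]
      refine setLIntegral_mono' (hT.diff hNmeas) fun a ha => ?_
      obtain ⟨hLf, _⟩ := hfL_onT a ha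
      rw [← ENNReal.ofReal_mul hL0.le]
      exact ENNReal.ofReal_le_ofReal hLf
    have e3 : ∫⁻ a in T, ENNReal.ofReal (w a) ∂F.μ = ENNReal.ofReal (∫ a in T, w a ∂F.μ) := by
      rw [ofReal_integral_eq_lintegral_ofReal hint.integrableOn ((ae_restrict_iff' hT).2 hwT0)]
    have e4 : ∫ a in T, w a ∂F.μ ≤ Ent + c := by
      have hsplit : ∫ a in T, w a ∂F.μ + ∫ a in Tᶜ, w a ∂F.μ = Ent :=
        integral_add_compl hT hint
      have hlow : -c ≤ ∫ a in Tᶜ, w a ∂F.μ := by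
        have h1 : ∫ a in Tᶜ, (-c) ∂F.μ ≤ ∫ a in Tᶜ, w a ∂F.μ := by
          refine setIntegral_mono_on (integrableOn_const (measure_ne_top _ _))
            hint.integrableOn hT.compl fun a _ => ?_
          rw [hwa, hcdef]
          exact aux_neg_exp_le_mul_log (hf₀ a)
        have h2 : ∫ a in Tᶜ, (-c) ∂F.μ = (F.μ Tᶜ).toReal * (-c) := by
          rw [setIntegral_const]; simp [smul_eq_mul, measureReal_def]
        have h3 : (F.μ Tᶜ).toReal ≤ 1 := by
          exact ENNReal.toReal_mono ENNReal.one_ne_top prob_le_one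
        nlinarith [ENNReal.toReal_nonneg (a := F.μ Tᶜ)]
      linarith
    have := (e2.trans_eq e3).trans (ENNReal.ofReal_le_ofReal e4)
    have h5 := ENNReal.toReal_mono ENNReal.ofReal_ne_top this
    rw [ENNReal.toReal_mul, ENNReal.toReal_ofReal hL0.le,
      ENNReal.toReal_ofReal (by positivity)] at h5
    exact h5
  have hphalf : p ≤ ε / 2 := by
    have hLε : L * (ε/2) = Ent + c := by
      rw [hLdef]; field_simp
    nlinarith
  -- the truncated measure and its density
  set ν' : Measure E := ν₀.restrict Tᶜ with hν'def
  haveI : IsFiniteMeasure ν' := by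
    constructor
    rw [hν'def, Measure.restrict_apply_univ]
    exact (lt_of_le_of_lt prob_le_one ENNReal.one_lt_top)
  have hν'μ : ν' ≪ F.μ := (Measure.absolutelyContinuous_of_le Measure.restrict_le_self).trans hν₀μ
  set h : E → ℝ≥0∞ := ν'.rnDeriv F.μ with hhdef
  have hhmeas : Measurable h := Measure.measurable_rnDeriv _ _
  have hν'leM : ∀ S : Set E, MeasurableSet S → ν' S ≤ ENNReal.ofReal M * F.μ S := by
    intro S hS
    rw [hν'def, Measure.restrict_apply hS, hν₀A (hS.inter hT.compl)]
    calc ∫⁻ a in S ∩ Tᶜ, ENNReal.ofReal (f₀ a) ∂F.μ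
        ≤ ∫⁻ _ in S ∩ Tᶜ, ENNReal.ofReal M ∂F.μ := by
          refine setLIntegral_mono' (hS.inter hT.compl) fun a ha => ?_
          exact ENNReal.ofReal_le_ofReal (hfM_onTc a ha.2)
      _ = ENNReal.ofReal M * F.μ (S ∩ Tᶜ) := by rw [setLIntegral_const]
      _ ≤ ENNReal.ofReal M * F.μ S :=
          mul_le_mul_right (measure_mono Set.inter_subset_left) _
  have hhM : ∀ᵐ a ∂F.μ, h a ≤ ENNReal.ofReal M := by
    refine ae_le_of_forall_setLIntegral_le_of_sigmaFinite hhmeas fun s hs _ => ?_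
    rw [Measure.setLIntegral_rnDeriv' hν'μ hs, setLIntegral_const]
    exact hν'leM s hs
  have hν'h : F.μ.withDensity h = ν' := Measure.withDensity_rnDeriv_eq ν' F.μ hν'μ
  have hinthE : ∫⁻ a, h a ∂F.μ = ν₀ Tᶜ := by
    rw [Measure.lintegral_rnDeriv hν'μ, hν'def, Measure.restrict_apply_univ]
  have hν₀Tc : ν₀ Tᶜ = 1 - pE := by
    rw [measure_compl hT hpEtop, measure_univ]
  set h₁ : E → ℝ := fun a => (h a).toReal with hh₁def
  have hh₁meas : Measurable h₁ := hhmeas.ennreal_toReal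
  have hh₁nn : ∀ a, 0 ≤ h₁ a := fun a => ENNReal.toReal_nonneg
  have hh₁int : Integrable h₁ F.μ := by
    refine integrable_toReal_of_lintegral_ne_top hhmeas.aemeasurable ?_
    rw [hinthE]
    exact (lt_of_le_of_lt prob_le_one ENNReal.one_lt_top).ne
  have hinth₁ : ∫ a, h₁ a ∂F.μ = 1 - p := by
    rw [hh₁def, integral_toReal hhmeas.aemeasurable (Measure.rnDeriv_lt_top _ _), hinthE,
      hν₀Tc, ENNReal.toReal_sub_of_le hpE1 ENNReal.one_ne_top, ENNReal.toReal_one, hpdef]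
  -- L² bound for h₁
  have hh₁norm : eLpNorm h₁ 2 F.μ ≤ ENNReal.ofReal (Real.exp (L/2)) := by
    rw [eLpNorm_eq_lintegral_rpow_enorm_toReal two_ne_zero ENNReal.ofNat_ne_top]
    have h2 : ((2:ℝ≥0∞)).toReal = (2:ℝ) := by simp
    rw [h2]
    have hbound : ∫⁻ a, (‖h₁ a‖₊ : ℝ≥0∞) ^ (2:ℝ) ∂F.μ ≤ ENNReal.ofReal M := by
      have step : ∫⁻ a, (‖h₁ a‖₊ : ℝ≥0∞) ^ (2:ℝ) ∂F.μ
          ≤ ∫⁻ a, ENNReal.ofReal M * h a ∂F.μ := by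
        refine lintegral_mono_ae ?_
        filter_upwards [hhM] with a ha
        have hfin : h a ≠ ∞ := (lt_of_le_of_lt ha ENNReal.ofReal_lt_top).ne
        rw [aux_enorm_sq, hh₁def]
        have : ENNReal.ofReal ((h a).toReal ^ 2) = h a * h a := by
          rw [sq, ← ENNReal.toReal_mul, ENNReal.ofReal_toReal (ENNReal.mul_ne_top hfin hfin)]
        rw [this]
        exact mul_le_mul_left ha _
      calc ∫⁻ a, (‖h₁ a‖₊ : ℝ≥0∞) ^ (2:ℝ) ∂F.μ ≤ ∫⁻ a, ENNReal.ofReal M * h a ∂F.μ := step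
        _ = ENNReal.ofReal M * ∫⁻ a, h a ∂F.μ := lintegral_const_mul' _ _ ENNReal.ofReal_ne_top
        _ ≤ ENNReal.ofReal M * 1 := by
            rw [hinthE]
            exact mul_le_mul_right prob_le_one _
        _ = ENNReal.ofReal M := mul_one _
    calc (∫⁻ a, (‖h₁ a‖₊ : ℝ≥0∞) ^ (2:ℝ) ∂F.μ) ^ (1/(2:ℝ))
        ≤ (ENNReal.ofReal M) ^ (1/(2:ℝ)) := ENNReal.rpow_le_rpow hbound (by norm_num)
      _ = ENNReal.ofReal (M ^ (1/(2:ℝ))) := ENNReal.ofReal_rpow_of_nonneg hM0.le (by norm_num)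
      _ = ENNReal.ofReal (Real.exp (L/2)) := by
          rw [Real.rpow_def_of_pos hM0, hlogM]
          norm_num
          ring_nf
  -- the threshold time
  set B : ℝ := (1 + Ent) / (lam * ε) with hBdef
  have hB0 : 0 < B := by
    rw [hBdef]
    have : (0:ℝ) < 1 + Ent := by linarith
    positivity
  have key : ∀ t : ℝ, B ≤ t → tvDist (ν₀.bind fun y => (F.κ t) y) F.μ ≤ ε := by
    intro t hBt
    have ht0 : 0 ≤ t := le_trans hB0.le hBt
    haveI := F.isMarkov t
    refine tvDist_le_of fun A hA => ?_
    -- notation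
    set a : ℝ := (F.μ A).toReal with hadef
    have ha0 : 0 ≤ a := ENNReal.toReal_nonneg
    have ha1 : a ≤ 1 := ENNReal.toReal_mono ENNReal.one_ne_top prob_le_one
    set cA : E → ℝ := fun x => ((F.κ t) x A).toReal with hcAdef
    have hcAmeas : Measurable cA := ((F.κ t).measurable_coe hA).ennreal_toReal
    have hcA0 : ∀ x, 0 ≤ cA x := fun x => ENNReal.toReal_nonneg
    have hcA1 : ∀ x, cA x ≤ 1 := fun x => ENNReal.toReal_mono ENNReal.one_ne_top prob_le_one
    set g : E → ℝ := fun x => A.indicator (fun _ => (1:ℝ)) x - a with hgdef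
    set q : E → ℝ := fun x => cA x - a with hqdef
    have hqmeas : Measurable q := hcAmeas.sub measurable_const
    have hq1 : ∀ x, |q x| ≤ 1 := fun x => abs_le.2 ⟨by
      have := hcA0 x; simp only [hqdef]; linarith, by
      have := hcA1 x; simp only [hqdef]; linarith⟩
    have hPop : Pop F.κ t g = q := by
      funext x
      show ∫ y, (A.indicator (fun _ => (1:ℝ)) y - a) ∂((F.κ t) x) = q x
      rw [integral_sub ((integrable_const (1:ℝ)).indicator hA) (integrable_const a),
        integral_indicator_const _ hA, integral_const, probReal_univ]
      simp [hqdef, hcAdef, measureReal_def]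
    have hg2 : MemLp g 2 F.μ :=
      (memLp_indicator_const 2 hA (1:ℝ) (Or.inr (measure_ne_top _ _))).sub (memLp_const a)
    have hgm : ∫ x, g x ∂F.μ = 0 := by
      rw [hgdef]
      rw [integral_sub ((integrable_const (1:ℝ)).indicator hA) (integrable_const a),
        integral_indicator_const _ hA, integral_const, probReal_univ]
      simp [hadef, measureReal_def]
    have gap := hgap g hg2 hgm t ht0
    rw [hPop] at gap
    -- eLpNorm of g
    have hμA : F.μ A = ENNReal.ofReal a := (ENNReal.ofReal_toReal (measure_ne_top _ _)).symm
    have hμAc : F.μ Aᶜ = ENNReal.ofReal (1 - a) := by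
      rw [measure_compl hA (measure_ne_top _ _), measure_univ, hμA, ← ENNReal.ofReal_one,
        ← ENNReal.ofReal_sub _ ha0]
    have hgnorm : eLpNorm g 2 F.μ ≤ ENNReal.ofReal (1/2) := by
      rw [eLpNorm_eq_lintegral_rpow_enorm_toReal two_ne_zero ENNReal.ofNat_ne_top,
        show ((2:ℝ≥0∞)).toReal = (2:ℝ) by simp]
      have hval : ∫⁻ x, (‖g x‖₊ : ℝ≥0∞) ^ (2:ℝ) ∂F.μ ≤ ENNReal.ofReal (1/4) := by
        rw [← lintegral_add_compl (fun x => (‖g x‖₊ : ℝ≥0∞) ^ (2:ℝ)) hA]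
        have e1 : ∫⁻ x in A, (‖g x‖₊ : ℝ≥0∞) ^ (2:ℝ) ∂F.μ
            = ENNReal.ofReal ((1-a)^2) * ENNReal.ofReal a := by
          rw [setLIntegral_congr_fun hA (fun x hx => ?_), setLIntegral_const, hμA]
          rw [aux_enorm_sq, hgdef]
          simp [Set.indicator_of_mem hx]
        have e2 : ∫⁻ x in Aᶜ, (‖g x‖₊ : ℝ≥0∞) ^ (2:ℝ) ∂F.μ
            = ENNReal.ofReal (a^2) * ENNReal.ofReal (1 - a) := by
          rw [setLIntegral_congr_fun hA.compl (fun x hx => ?_), setLIntegral_const,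
            hμAc]
          rw [aux_enorm_sq, hgdef]
          simp only [Set.indicator_of_notMem hx]
          norm_num
        rw [e1, e2, ← ENNReal.ofReal_mul (by positivity), ← ENNReal.ofReal_mul (by positivity),
          ← ENNReal.ofReal_add (by nlinarith [sq_nonneg (1-a)]) (by nlinarith [sq_nonneg a])]
        exact ENNReal.ofReal_le_ofReal (by nlinarith [sq_nonneg (2*a-1)])
      calc (∫⁻ x, (‖g x‖₊ : ℝ≥0∞) ^ (2:ℝ) ∂F.μ) ^ (1/(2:ℝ))
          ≤ (ENNReal.ofReal (1/4)) ^ (1/(2:ℝ)) := ENNReal.rpow_le_rpow hval (by norm_num)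
        _ = ENNReal.ofReal ((1/4:ℝ) ^ (1/(2:ℝ))) :=
            ENNReal.ofReal_rpow_of_nonneg (by norm_num) (by norm_num)
        _ = ENNReal.ofReal (1/2) := by
            congr 1
            rw [show (1/4:ℝ) = (1/2:ℝ)^((2:ℕ):ℝ) by norm_num, ← Real.rpow_mul (by norm_num)]
            norm_num
    -- eLpNorm of q
    have hqnorm : eLpNorm q 2 F.μ ≤ ENNReal.ofReal (Real.exp (-lam*t) * (1/2)) := by
      calc eLpNorm q 2 F.μ ≤ ENNReal.ofReal (Real.exp (-lam * t)) * eLpNorm g 2 F.μ := gap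
        _ ≤ ENNReal.ofReal (Real.exp (-lam * t)) * ENNReal.ofReal (1/2) :=
            mul_le_mul_right hgnorm _
        _ = ENNReal.ofReal (Real.exp (-lam*t) * (1/2)) :=
            (ENNReal.ofReal_mul (Real.exp_nonneg _)).symm
    -- Hölder
    have hconj : Real.HolderConjugate 2 2 := Real.HolderConjugate.two_two
    have hint_h₁q : Integrable (fun x => h₁ x * q x) F.μ := by
      refine Integrable.mono hh₁int ((hh₁meas.mul hqmeas).aestronglyMeasurable)
        (ae_of_all _ fun x => ?_)
      rw [Real.norm_eq_abs, Real.norm_eq_abs, abs_mul]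
      calc |h₁ x| * |q x| ≤ |h₁ x| * 1 := by
            have := hq1 x
            have := abs_nonneg (h₁ x)
            nlinarith
        _ = |h₁ x| := mul_one _
    have hHolder : |∫ x, h₁ x * q x ∂F.μ| ≤ Real.exp (L/2) * (Real.exp (-lam*t) * (1/2)) := by
      have step1 : ENNReal.ofReal (∫ x, |h₁ x * q x| ∂F.μ)
          = ∫⁻ x, (‖h₁ x‖₊ : ℝ≥0∞) * (‖q x‖₊ : ℝ≥0∞) ∂F.μ := by
        rw [ofReal_integral_eq_lintegral_ofReal hint_h₁q.abs
          (ae_of_all _ fun x => abs_nonneg _)]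
        refine lintegral_congr fun x => ?_
        rw [← enorm_eq_nnnorm, ← enorm_eq_nnnorm, Real.enorm_eq_ofReal_abs, Real.enorm_eq_ofReal_abs,
          ← ENNReal.ofReal_mul (abs_nonneg _), ← abs_mul]
      have heq2 : eLpNorm h₁ 2 F.μ = (∫⁻ x, (‖h₁ x‖₊:ℝ≥0∞) ^ (2:ℝ) ∂F.μ) ^ (1/(2:ℝ)) := by
        rw [eLpNorm_eq_lintegral_rpow_enorm_toReal two_ne_zero ENNReal.ofNat_ne_top]
        norm_num
        rfl
      have heq3 : eLpNorm q 2 F.μ = (∫⁻ x, (‖q x‖₊:ℝ≥0∞) ^ (2:ℝ) ∂F.μ) ^ (1/(2:ℝ)) := by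
        rw [eLpNorm_eq_lintegral_rpow_enorm_toReal two_ne_zero ENNReal.ofNat_ne_top]
        norm_num
        rfl
      have hh₁' : (∫⁻ x, (‖h₁ x‖₊:ℝ≥0∞) ^ (2:ℝ) ∂F.μ) ^ (1/(2:ℝ))
          ≤ ENNReal.ofReal (Real.exp (L/2)) := by rw [← heq2]; exact hh₁norm
      have hq' : (∫⁻ x, (‖q x‖₊:ℝ≥0∞) ^ (2:ℝ) ∂F.μ) ^ (1/(2:ℝ))
          ≤ ENNReal.ofReal (Real.exp (-lam*t) * (1/2)) := by rw [← heq3]; exact hqnorm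
      have step2 := ENNReal.lintegral_mul_le_Lp_mul_Lq F.μ hconj
        hh₁meas.enorm.aemeasurable hqmeas.enorm.aemeasurable
      simp only [Pi.mul_apply] at step2
      have step3 : ENNReal.ofReal (∫ x, |h₁ x * q x| ∂F.μ)
          ≤ ENNReal.ofReal (Real.exp (L/2)) * ENNReal.ofReal (Real.exp (-lam*t) * (1/2)) := by
        rw [step1]
        exact le_trans step2 (mul_le_mul' hh₁' hq')
      have habs : ∫ x, |h₁ x * q x| ∂F.μ ≤ Real.exp (L/2) * (Real.exp (-lam*t) * (1/2)) := by
        have h6 := step3.trans_eq (ENNReal.ofReal_mul (Real.exp_nonneg _)).symm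
        exact (ENNReal.ofReal_le_ofReal_iff (by positivity)).1 h6
      calc |∫ x, h₁ x * q x ∂F.μ| ≤ ∫ x, |h₁ x * q x| ∂F.μ := by
            have h7 := norm_integral_le_integral_norm (μ := F.μ) (fun x => h₁ x * q x)
            simp only [Real.norm_eq_abs] at h7
            exact h7
        _ ≤ _ := habs
    -- the main term is at most ε/2
    have hmain : |∫ x, h₁ x * q x ∂F.μ| ≤ ε / 2 := by
      refine hHolder.trans ?_
      have hexp : Real.exp (L/2) * Real.exp (-lam*t) = Real.exp (L/2 - lam*t) := by
        rw [← Real.exp_add]; ring_nf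
      have hlamB : (1 + Ent) / ε ≤ lam * t := by
        have : lam * B = (1 + Ent) / ε := by
          rw [hBdef]; field_simp
        rw [← this]
        exact mul_le_mul_of_nonneg_left hBt hlam.le
      have harg : L/2 - lam*t ≤ (c - 1)/ε := by
        have : L/2 = (Ent + c)/ε := by rw [hLdef]; ring
        rw [this]
        have : (Ent + c)/ε - (1 + Ent)/ε = (c - 1)/ε := by ring
        linarith [hlamB]
      have : Real.exp (L/2 - lam*t) ≤ ε := by
        calc Real.exp (L/2 - lam*t) ≤ Real.exp ((c-1)/ε) := Real.exp_le_exp.2 harg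
          _ ≤ ε := by rw [hcdef]; exact aux_eps hε0 hε1.le
      calc Real.exp (L/2) * (Real.exp (-lam*t) * (1/2))
          = Real.exp (L/2 - lam*t) * (1/2) := by rw [← hexp]; ring
        _ ≤ ε * (1/2) := by nlinarith [Real.exp_pos (L/2 - lam*t)]
        _ = ε / 2 := by ring
    -- decompose ν_t(A)
    set tailE : ℝ≥0∞ := ∫⁻ x in T, (F.κ t) x A ∂ν₀ with htailEdef
    have htailE_le : tailE ≤ pE := by
      rw [htailEdef, hpEdef]
      calc ∫⁻ x in T, (F.κ t) x A ∂ν₀ ≤ ∫⁻ _ in T, 1 ∂ν₀ :=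
            lintegral_mono fun x => prob_le_one
        _ = ν₀ T := by rw [setLIntegral_one]
    have htailE_top : tailE ≠ ∞ := (lt_of_le_of_lt (htailE_le.trans hpE1) ENNReal.one_lt_top).ne
    have hmainE_eq : ∫⁻ x in Tᶜ, (F.κ t) x A ∂ν₀ = ∫⁻ x, h x * (F.κ t) x A ∂F.μ := by
      have : ν₀.restrict Tᶜ = ν' := rfl
      rw [show (∫⁻ x in Tᶜ, (F.κ t) x A ∂ν₀) = ∫⁻ x, (F.κ t) x A ∂ν' from rfl, ← hν'h,
        lintegral_withDensity_eq_lintegral_mul F.μ hhmeas ((F.κ t).measurable_coe hA)]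
      rfl
    have hmainE_le : ∫⁻ x, h x * (F.κ t) x A ∂F.μ ≤ 1 := by
      calc ∫⁻ x, h x * (F.κ t) x A ∂F.μ ≤ ∫⁻ x, h x * 1 ∂F.μ :=
            lintegral_mono fun x => mul_le_mul_right prob_le_one _
        _ = ν₀ Tᶜ := by simpa using hinthE
        _ ≤ 1 := prob_le_one
    have hbind : ((ν₀.bind fun y => (F.κ t) y) A).toReal
        = tailE.toReal + ∫ x, h₁ x * cA x ∂F.μ := by
      have hb1 : (ν₀.bind fun y => (F.κ t) y) A = ∫⁻ x, (F.κ t) x A ∂ν₀ :=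
        Measure.bind_apply hA (F.κ t).measurable.aemeasurable
      have hb2 : ∫⁻ x, (F.κ t) x A ∂ν₀
          = tailE + ∫⁻ x, h x * (F.κ t) x A ∂F.μ := by
        rw [← hmainE_eq, htailEdef, lintegral_add_compl _ hT]
      have hb3 : (∫⁻ x, h x * (F.κ t) x A ∂F.μ).toReal = ∫ x, h₁ x * cA x ∂F.μ := by
        have h8 : ∫ x, (h x * (F.κ t) x A).toReal ∂F.μ
            = (∫⁻ x, h x * (F.κ t) x A ∂F.μ).toReal := by
          refine integral_toReal ((hhmeas.mul ((F.κ t).measurable_coe hA)).aemeasurable) ?_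
          filter_upwards [hhM] with x hx
          exact lt_of_le_of_lt (mul_le_mul' hx prob_le_one)
            (by rw [mul_one]; exact ENNReal.ofReal_lt_top)
        rw [← h8]
        exact integral_congr_ae (ae_of_all _ fun x => ENNReal.toReal_mul)
      rw [hb1, hb2, ENNReal.toReal_add htailE_top (lt_of_le_of_lt hmainE_le ENNReal.one_lt_top).ne,
        hb3]
    have hsplit : ∫ x, h₁ x * cA x ∂F.μ = (∫ x, h₁ x * q x ∂F.μ) + a * (1 - p) := by
      have hfun : (fun x => h₁ x * cA x) = fun x => h₁ x * q x + a * h₁ x := by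
        funext x; simp only [hqdef]; ring
      rw [hfun, integral_add hint_h₁q (hh₁int.const_mul a), integral_const_mul, hinth₁]
    -- tail bounds in ℝ
    have htail0 : 0 ≤ tailE.toReal := ENNReal.toReal_nonneg
    have htailp : tailE.toReal ≤ p := ENNReal.toReal_mono hpEtop htailE_le
    -- finish
    rw [hbind, hsplit]
    have hap : 0 ≤ a * p := by positivity
    have hap1 : a * p ≤ p := by nlinarith
    have : tailE.toReal + ((∫ x, h₁ x * q x ∂F.μ) + a * (1 - p)) - a
        = (tailE.toReal - a * p) + ∫ x, h₁ x * q x ∂F.μ := by ring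
    rw [this]
    calc |(tailE.toReal - a * p) + ∫ x, h₁ x * q x ∂F.μ|
        ≤ |tailE.toReal - a * p| + |∫ x, h₁ x * q x ∂F.μ| := abs_add_le _ _
      _ ≤ p + ε/2 := add_le_add (abs_le.2 ⟨by linarith, by linarith⟩) hmain
      _ ≤ ε := by linarith [hphalf]
  refine ⟨fun t ht => key t ht, ?_⟩
  refine iInf_le_of_le B (le_trans (iInf_le _ ⟨hB0, key B le_rfl⟩) le_rfl)
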